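/- Let w ∈ W̃_{2n} have linear part σ ∈ S*_{2n}, and let μ_k be the vectors attached to its extended alcove, satisfying μ_k = μ_{k-1} + e_{σ(k)} - e_k and μ_k + μ*_{2n-k} = 0. Then for all 0 ≤ k ≤ n: −1 ≤ μ_k(i) + μ_k(i*) ≤ 0 for i ∈ A_k := {1,...,k} ∪ {k*,...,2n}, and 0 ≤ μ_k(i) + μ_k(i*) ≤ 1 for i ∈ B_k := {k+1,...,2n-k}. -/
import Mathlib


/-- `rev n i = i*` where `i* = 2n+1-i` (0-based). -/
def rev (n : ℕ) (i : Fin (2 * n)) : Fin (2 * n) :=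
  ⟨2 * n - 1 - i.val, by have := i.isLt; omega⟩

/-- standard basis vector of ℤ^{2n}. -/
def eZ (n : ℕ) (j : Fin (2 * n)) : Fin (2 * n) → ℤ := fun i => if i = j then 1 else 0

/-- basic inequalities: let σ ∈ S*_{2n} and let μ_0,...,μ_{2n}
satisfy μ_0 = μ_{2n}, the recursion μ_k = μ_{k-1} + e_{σ(k)} - e_k and the
duality μ_k + μ*_{2n-k} = 0.  Then for 0 ≤ k ≤ n:
-1 ≤ μ_k(i) + μ_k(i*) ≤ 0 for i ∈ A_k = {1,...,k} ∪ {k*,...,2n}, and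
0 ≤ μ_k(i) + μ_k(i*) ≤ 1 for i ∈ B_k = {k+1,...,2n-k}. -/
theorem stmt4 (n : ℕ) (hn : 2 ≤ n)
    (σ : Equiv.Perm (Fin (2 * n))) (hσ : ∀ i, σ (rev n i) = rev n (σ i))
    (μ : ℕ → Fin (2 * n) → ℤ)
    (hper : μ 0 = μ (2 * n))
    (hrec : ∀ k : Fin (2 * n),
      μ (k.val + 1) = fun i => μ k.val i + eZ n (σ k) i - eZ n k i)
    (hdual : ∀ k ≤ 2 * n, ∀ i, μ k i + μ (2 * n - k) (rev n i) = 0) :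
    ∀ k ≤ n, ∀ i : Fin (2 * n),
      ((i.val < k ∨ 2 * n - k ≤ i.val) →
        -1 ≤ μ k i + μ k (rev n i) ∧ μ k i + μ k (rev n i) ≤ 0) ∧
      ((k ≤ i.val ∧ i.val < 2 * n - k) →
        0 ≤ μ k i + μ k (rev n i) ∧ μ k i + μ k (rev n i) ≤ 1) := by
  -- closed form for μ m j
  have key : ∀ m ≤ 2 * n, ∀ j : Fin (2 * n), μ m j =
      μ 0 j + (if (σ.symm j).val < m then 1 else 0)
        - (if j.val < m then 1 else 0) := by
    intro m hm
    induction m with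
    | zero => intro j; simp
    | succ m ih =>
      intro j
      have hm' : m < 2 * n := by omega
      have h := congrFun (hrec ⟨m, hm'⟩) j
      rw [h, ih (by omega) j]
      simp only [eZ]
      have h1 : (j = σ ⟨m, hm'⟩) ↔ (σ.symm j).val = m := by
        rw [← Equiv.symm_apply_eq, Fin.ext_iff]
      have h2 : (j = (⟨m, hm'⟩ : Fin (2 * n))) ↔ j.val = m := Fin.ext_iff
      rw [if_congr h1 rfl rfl, if_congr h2 rfl rfl]
      split_ifs <;> omega
  intro k hk i
  have h1 := key k (by omega) i
  have h2 := key (2 * n - k) (by omega) i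
  have hd := hdual k (by omega) (rev n i)
  have hrr : rev n (rev n i) = i := by
    have := i.isLt
    simp only [rev]
    exact Fin.ext (by simp; omega)
  rw [hrr] at hd
  have ha := (σ.symm i).isLt
  have hb := i.isLt
  constructor <;> intro h <;> split_ifs at h1 h2 <;> omega
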